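/- Let M be a nonempty compact convex subset of a finite-dimensional real vector space V, and let r : V → ℝ be linear. For a vector x in a finite-dimensional space, suppose there exists c > 0 such that for every v with ‖v‖₁ ≤ 1, the point x + c·v lies in the set P_m = {x' : ⟨r₂(x'), m⟩ ≥ ⟨r₂(x'), m'⟩ for all m' ∈ M}, where r₂(x') is an affine function of x'. Then for every m' ∈ M with ⟨r₂(x), m'⟩ = ⟨r₂(x), m⟩ (i.e., m' is also a best response at x), the linear functional defining the perturbation vanishes on m - m'. Concretely: if f, g : ℝ^d → (V → ℝ) with f(x')(m) = ⟨r + L x', m⟩ for a linear map L : ℝ^d → V*, and m maximizes f(x + cv) over M for all ‖v‖₁ ≤ 1, then any m' ∈ M maximizing f(x) satisfies L(e_i)(m - m') = 0 for every standard basis vector e_i. -/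
import Mathlib

set_option synthInstance.maxHeartbeats 1000000


/-- If `x` is an interior-point allocation of the region where `m` is a
best response (with margin `c > 0` in the ℓ¹ norm), then for any other best response
`m'` of `x`, the perturbation functionals `L e_i` vanish on `m - m'`. -/
theorem interior_point_allocation_perturbation_vanishes
    {V : Type*} [NormedAddCommGroup V] [NormedSpace ℝ V] [FiniteDimensional ℝ V]
    {d : ℕ} (M : Set V) (hMne : M.Nonempty) (hMcpt : IsCompact M) (hMconv : Convex ℝ M)
    (r : V →ₗ[ℝ] ℝ) (L : (Fin d → ℝ) →ₗ[ℝ] (V →ₗ[ℝ] ℝ))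
    (x : Fin d → ℝ) (c : ℝ) (hc : 0 < c)
    (m : V) (hm : m ∈ M)
    (hint : ∀ v : Fin d → ℝ, (∑ i, |v i|) ≤ 1 →
      ∀ m' ∈ M, (r + L (x + c • v)) m' ≤ (r + L (x + c • v)) m)
    (m' : V) (hm' : m' ∈ M)
    (hbr' : ∀ m'' ∈ M, (r + L x) m'' ≤ (r + L x) m') :
    ∀ i : Fin d, (L (Pi.single i 1)) (m - m') = 0 := by
  intro i
  -- equality at x
  have heq : (r + L x) m' = (r + L x) m := by
    have h1 := hint 0 (by simp) m' hm'
    have h2 := hbr' m hm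
    simp only [smul_zero, add_zero] at h1
    linarith
  have key : ∀ (s : ℝ), |s| = 1 →
      s * (L (Pi.single i 1)) m' ≤ s * (L (Pi.single i 1)) m := by
    intro s hs
    have hsum : (∑ j, |(Pi.single i s : Fin d → ℝ) j|) ≤ 1 := by
      have : ∀ j, |(Pi.single i s : Fin d → ℝ) j| = if j = i then (1:ℝ) else 0 := by
        intro j
        by_cases h : j = i <;> simp [Pi.single_apply, h, hs]
      simp [this]
    have h := hint (Pi.single i s) hsum m' hm'
    have hv : (Pi.single i s : Fin d → ℝ) = s • ((Pi.single i 1 : Fin d → ℝ)) := by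
      ext j; by_cases h : j = i <;> simp [Pi.single_apply, h]
    have e : ∀ y : V, (r + L (x + c • (Pi.single i s : Fin d → ℝ))) y
        = (r + L x) y + (c * s) * (L ((Pi.single i 1 : Fin d → ℝ))) y := by
      intro y
      rw [hv]
      simp [map_add, map_smul, smul_smul]
      ring
    rw [e, e, heq] at h
    nlinarith [h, hc]
  have h1 := key 1 (by norm_num)
  have h2 := key (-1) (by norm_num)
  have : (L (Pi.single i 1)) m' = (L (Pi.single i 1)) m := by nlinarith
  simp [map_sub, this]
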